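/- Let S be a commutative unital ring and let g, h ∈ S with g and h both nonunits and h a regular element (non-zerodivisor). Then gh is not a logical power of gh; that is, there exists a divisor of gh which is neither a unit nor a multiple of gh. -/

import Mathlib

def IsLogPow {S : Type*} [CommRing S] (p f : S) : Prop :=
  p ∣ f ∧ (p - 1) ∣ (f - 1) ∧ ∀ g : S, g ∣ f → IsUnit g ∨ p ∣ g

theorem stmt_0 {S : Type*} [CommRing S] (g h : S)
    (hg : ¬IsUnit g) (hh : ¬IsUnit h) (hreg : h ∈ nonZeroDivisors S) :
    ¬IsLogPow (g * h) (g * h) ∧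
      ∃ d : S, d ∣ g * h ∧ ¬IsUnit d ∧ ¬(g * h ∣ d) := by
  have hdvd : h ∣ g * h := Dvd.intro_left g rfl
  have hnd : ¬(g * h ∣ h) := by
    rintro ⟨k, hk⟩
    apply hg
    have h0 : (1 - g * k) * h = 0 := by linear_combination hk
    have h1 : 1 - g * k = 0 := mem_nonZeroDivisors_iff_right.mp hreg _ h0
    exact IsUnit.of_mul_eq_one (a := g) k (by linear_combination -h1)
  exact ⟨fun hlp => (hlp.2.2 h hdvd).elim hh hnd, h, hdvd, hh, hnd⟩
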